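/- Smooth leftover hash lemma: Under the same setup as the leftover hash lemma, if H_min^ε(X|Z) ≥ t for some ε ≥ 0 (i.e., there exists an event ℰ with P[ℰ] ≥ 1−ε and ∑_z max_x P[X = x, Z = z, ℰ] ≤ 2^{−t}), then the statistical distance between (F(X), F, Z) and (U, F, Z) is at most (1/2)·2^{−(t−ℓ)/2} + 2ε. -/

import Mathlib

open Finset


lemma fiber_sum {α β M : Type*} [Fintype α] [Fintype β] [DecidableEq β] [AddCommMonoid M]
    (g : α → β) (P : β → Prop) [DecidablePred P] (R : α → Prop) [DecidablePred R] (p : α → M) :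
    ∑ x ∈ univ.filter P, ∑ ω ∈ univ.filter (fun ω => g ω = x ∧ R ω), p ω
      = ∑ ω ∈ univ.filter (fun ω => P (g ω) ∧ R ω), p ω := by
  classical
  simp only [Finset.sum_filter]
  have h1 : ∀ x : β, (if P x then ∑ ω : α, if g ω = x ∧ R ω then p ω else 0 else 0)
      = ∑ ω : α, if P x ∧ g ω = x ∧ R ω then p ω else 0 := by
    intro x; by_cases hP : P x <;> simp [hP]
  simp only [h1]
  rw [Finset.sum_comm]
  refine Finset.sum_congr rfl fun ω _ => ?_
  have h2 : ∀ x : β, (if P x ∧ g ω = x ∧ R ω then p ω else 0)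
      = if g ω = x then (if P x ∧ R ω then p ω else 0) else 0 := by
    intro x; by_cases h : g ω = x <;> simp [h, and_comm, and_assoc]
  simp only [h2, Finset.sum_ite_eq univ (g ω), mem_univ, if_true]


lemma sq_fiber {α β : Type*} [Fintype α] [Fintype β] [DecidableEq β]
    (g : α → β) (w : α → ℝ) :
    ∑ b : β, (∑ x ∈ univ.filter (fun x => g x = b), w x)^2
      = ∑ x, ∑ x', if g x = g x' then w x * w x' else 0 := by
  classical
  simp only [sq, Finset.sum_mul_sum, Finset.sum_filter]
  have h1 : ∀ b : β, (∑ x : α, ∑ x' : α, (if g x = b then w x else 0) * (if g x' = b then w x' else 0))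
      = ∑ x : α, ∑ x' : α, if g x = b ∧ g x' = b then w x * w x' else 0 := by
    intro b
    refine Finset.sum_congr rfl fun x _ => Finset.sum_congr rfl fun x' _ => ?_
    by_cases h : g x = b <;> by_cases h' : g x' = b <;> simp [h, h']
  simp only [h1]
  rw [Finset.sum_comm]
  refine Finset.sum_congr rfl fun x _ => ?_
  rw [Finset.sum_comm]
  refine Finset.sum_congr rfl fun x' _ => ?_
  by_cases h : g x = g x'
  · rw [h]
    simp [Finset.sum_ite_eq, h]
  · have hno : ∀ b, ¬(g x = b ∧ g x' = b) := fun b hb => h (hb.1.trans hb.2.symm)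
    simp [hno, h]


lemma collision_bound {𝒳 ℱ : Type*} [Fintype 𝒳] [Fintype ℱ] [DecidableEq 𝒳]
    (ℓ : ℕ) (hash : ℱ → 𝒳 → (Fin ℓ → Bool))
    (huniv2 : ∀ x x' : 𝒳, x ≠ x' →
      (((univ : Finset ℱ).filter (fun f => hash f x = hash f x')).card : ℝ)
        ≤ (Fintype.card ℱ : ℝ) / 2 ^ ℓ)
    (w : 𝒳 → ℝ) (hw : ∀ x, 0 ≤ w x) :
    ∑ f : ℱ, ∑ b : Fin ℓ → Bool, (∑ x ∈ univ.filter (fun x => hash f x = b), w x)^2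
      ≤ (Fintype.card ℱ : ℝ) * (∑ x, (w x)^2)
        + ((Fintype.card ℱ : ℝ)/2^ℓ) * (∑ x, w x)^2 := by
  classical
  have sqf : ∀ f : ℱ, ∑ b : Fin ℓ → Bool, (∑ x ∈ univ.filter (fun x => hash f x = b), w x)^2
      = ∑ x, ∑ x', if hash f x = hash f x' then w x * w x' else 0 := by
    intro f
    exact sq_fiber (hash f) w
  simp only [sqf]
  rw [Finset.sum_comm]
  have hcomm : ∀ x : 𝒳, ∑ f : ℱ, ∑ x' : 𝒳, (if hash f x = hash f x' then w x * w x' else 0)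
      = ∑ x' : 𝒳, ((((univ : Finset ℱ).filter (fun f => hash f x = hash f x')).card : ℝ)) * (w x * w x') := by
    intro x
    rw [Finset.sum_comm]
    refine Finset.sum_congr rfl fun x' _ => ?_
    rw [← Finset.sum_filter, Finset.sum_const, nsmul_eq_mul]
  simp only [hcomm]
  rw [sq (∑ x, w x), Finset.sum_mul_sum, Finset.mul_sum, Finset.mul_sum, ← Finset.sum_add_distrib]
  refine Finset.sum_le_sum fun x _ => ?_
  rw [← Finset.sum_erase_add univ _ (mem_univ x)]
  have h1 : ∑ x' ∈ univ.erase x, (((univ : Finset ℱ).filter (fun f => hash f x = hash f x')).card : ℝ) * (w x * w x')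
      ≤ ∑ x' ∈ univ.erase x, (Fintype.card ℱ : ℝ)/2^ℓ * (w x * w x') := by
    refine Finset.sum_le_sum fun x' hx' => ?_
    have hne : x ≠ x' := (Finset.ne_of_mem_erase hx').symm
    exact mul_le_mul_of_nonneg_right (huniv2 x x' hne) (mul_nonneg (hw x) (hw x'))
  have h2 : (((univ : Finset ℱ).filter (fun f => hash f x = hash f x)).card : ℝ) * (w x * w x)
      ≤ (Fintype.card ℱ : ℝ) * (w x)^2 := by
    rw [← sq]
    refine mul_le_mul_of_nonneg_right ?_ (sq_nonneg _)
    exact_mod_cast Finset.card_filter_le _ _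
  have h3 : (0:ℝ) ≤ (Fintype.card ℱ : ℝ)/2^ℓ * (w x * w x) :=
    mul_nonneg (div_nonneg (Nat.cast_nonneg _) (by positivity)) (mul_nonneg (hw x) (hw x))
  have hsplit : ∑ j : 𝒳, w x * w j = ∑ x' ∈ univ.erase x, w x * w x' + w x * w x :=
    (Finset.sum_erase_add univ _ (mem_univ x)).symm
  rw [hsplit, mul_add, Finset.mul_sum]
  have h4 := add_le_add h1 h2
  linarith [h4]


section
variable {𝒳 𝒵 ℱ : Type*} [Fintype 𝒳] [Fintype 𝒵] [Fintype ℱ]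
    [Nonempty 𝒳] [Nonempty ℱ] [DecidableEq 𝒳]

set_option maxHeartbeats 1000000 in
lemma lhl_aux (ℓ : ℕ) (t : ℝ)
    (q : 𝒳 → 𝒵 → ℝ) (hq : ∀ x z, 0 ≤ q x z) (hqsum : ∑ z, ∑ x, q x z ≤ 1)
    (ht : ∑ z, (univ : Finset 𝒳).sup' univ_nonempty (fun x => q x z) ≤ (2:ℝ)^(-t))
    (hash : ℱ → 𝒳 → (Fin ℓ → Bool))
    (huniv2 : ∀ x x' : 𝒳, x ≠ x' →
      (((univ : Finset ℱ).filter (fun f => hash f x = hash f x')).card : ℝ)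
        ≤ (Fintype.card ℱ : ℝ) / 2 ^ ℓ) :
    ∑ b : Fin ℓ → Bool, ∑ f : ℱ, ∑ z : 𝒵,
        |(∑ x ∈ univ.filter (fun x => hash f x = b), q x z) / (Fintype.card ℱ : ℝ)
          - (1 / 2 ^ ℓ) * (∑ x, q x z) / (Fintype.card ℱ : ℝ)|
      ≤ (2:ℝ) ^ (-(t - (ℓ:ℝ)) / 2) := by
  classical
  set F : ℝ := (Fintype.card ℱ : ℝ) with hFdef
  have hF : 0 < F := by rw [hFdef]; exact_mod_cast Fintype.card_pos
  set num : ℱ → (Fin ℓ → Bool) → 𝒵 → ℝ :=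
    fun f b z => ∑ x ∈ univ.filter (fun x => hash f x = b), q x z with hnum
  set Q : 𝒵 → ℝ := fun z => ∑ x, q x z with hQ
  set m : 𝒵 → ℝ := fun z => (univ : Finset 𝒳).sup' univ_nonempty (fun x => q x z) with hm
  set Sq : 𝒵 → ℝ := fun z => ∑ x, (q x z)^2 with hSq
  have hQ0 : ∀ z, 0 ≤ Q z := fun z => Finset.sum_nonneg fun x _ => hq x z
  have hm0 : ∀ z, 0 ≤ m z := by
    intro z
    obtain ⟨x⟩ := (inferInstance : Nonempty 𝒳)
    refine le_trans (hq x z) ?_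
    rw [hm]
    exact Finset.le_sup' (fun x => q x z) (mem_univ x)
  have hqm : ∀ x z, q x z ≤ m z := by
    intro x z
    rw [hm]
    exact Finset.le_sup' (fun x => q x z) (mem_univ x)
  have hSqm : ∀ z, Sq z ≤ m z * Q z := by
    intro z
    rw [hSq, hQ]
    simp only
    rw [Finset.mul_sum]
    exact Finset.sum_le_sum fun x _ => by
      rw [sq]
      exact mul_le_mul_of_nonneg_right (hqm x z) (hq x z)
  have hcardB : (Fintype.card (Fin ℓ → Bool) : ℝ) = 2^ℓ := by
    simp [Fintype.card_fun]
  -- reorder sums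
  have hreorder : ∑ b : Fin ℓ → Bool, ∑ f : ℱ, ∑ z : 𝒵,
        |num f b z / F - (1 / 2 ^ ℓ) * Q z / F|
      = ∑ z : 𝒵, ∑ f : ℱ, ∑ b : Fin ℓ → Bool,
        |num f b z / F - (1 / 2 ^ ℓ) * Q z / F| := by
    have h1 : ∀ (g : (Fin ℓ → Bool) → ℱ → 𝒵 → ℝ),
        ∑ b, ∑ f, ∑ z, g b f z = ∑ z, ∑ f, ∑ b, g b f z := by
      intro g
      calc ∑ b, ∑ f, ∑ z, g b f z
          = ∑ f, ∑ b, ∑ z, g b f z := Finset.sum_comm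
        _ = ∑ f, ∑ z, ∑ b, g b f z := Finset.sum_congr rfl fun f _ => Finset.sum_comm
        _ = ∑ z, ∑ f, ∑ b, g b f z := Finset.sum_comm
    exact h1 _
  rw [hreorder]
  -- per-z bound
  have key : ∀ z, ∑ f : ℱ, ∑ b : Fin ℓ → Bool, |num f b z / F - (1 / 2 ^ ℓ) * Q z / F|
      ≤ Real.sqrt ((2^ℓ : ℝ) * (m z * Q z)) := by
    intro z
    set c : ℝ := (1 / 2 ^ ℓ) * Q z / F with hc
    have hsumnum : ∀ f, ∑ b, num f b z = Q z := by
      intro f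
      exact Finset.sum_fiberwise univ (hash f) (fun x => q x z)
    have hcoll : ∑ f : ℱ, ∑ b : Fin ℓ → Bool, (num f b z)^2
        ≤ F * Sq z + (F/2^ℓ) * (Q z)^2 :=
      collision_bound ℓ hash huniv2 (fun x => q x z) (fun x => hq x z)
    have hexp : ∀ (f : ℱ) (b : Fin ℓ → Bool), (num f b z / F - c)^2
        = (num f b z)^2/F^2 - (2*Q z/(2^ℓ*F^2)) * num f b z
          + (Q z)^2/((2^ℓ*2^ℓ)*F^2) := by
      intro f b
      rw [hc]
      field_simp
      ring
    have hT : ∑ f : ℱ, ∑ b : Fin ℓ → Bool, (num f b z / F - c)^2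
        = (∑ f : ℱ, ∑ b : Fin ℓ → Bool, (num f b z)^2)/F^2
          - (2*Q z/(2^ℓ*F^2)) * (F * Q z)
          + (F * 2^ℓ) * ((Q z)^2/((2^ℓ*2^ℓ)*F^2)) := by
      simp only [hexp, Finset.sum_add_distrib, Finset.sum_sub_distrib]
      congr 1
      · congr 1
        · simp [← Finset.sum_div]
        · simp only [← Finset.mul_sum, hsumnum, Finset.sum_const, nsmul_eq_mul,
            card_univ, hFdef]
      · simp only [Finset.sum_const, nsmul_eq_mul, card_univ, hcardB, hFdef]
        ring
    have hTle : ∑ f : ℱ, ∑ b : Fin ℓ → Bool, (num f b z / F - c)^2 ≤ Sq z / F := by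
      rw [hT]
      have h5 : (∑ f : ℱ, ∑ b : Fin ℓ → Bool, (num f b z)^2)/F^2
          ≤ (F * Sq z + (F/2^ℓ) * (Q z)^2)/F^2 := by gcongr
      have heq : (F * Sq z + (F/2^ℓ) * (Q z)^2)/F^2
          - (2*Q z/(2^ℓ*F^2)) * (F * Q z)
          + (F * 2^ℓ) * ((Q z)^2/((2^ℓ*2^ℓ)*F^2)) = Sq z / F := by
        field_simp
        ring
      linarith [h5]
    -- Cauchy-Schwarz over the product type
    have hprod : ∀ (g : ℱ → (Fin ℓ → Bool) → ℝ),
        ∑ f : ℱ, ∑ b : Fin ℓ → Bool, g f b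
          = ∑ p : ℱ × (Fin ℓ → Bool), g p.1 p.2 :=
      fun g => (Fintype.sum_prod_type (f := fun p => g p.1 p.2)).symm
    have hS0 : 0 ≤ ∑ f : ℱ, ∑ b : Fin ℓ → Bool, |num f b z / F - c| :=
      Finset.sum_nonneg fun f _ => Finset.sum_nonneg fun b _ => abs_nonneg _
    have hcs : (∑ f : ℱ, ∑ b : Fin ℓ → Bool, |num f b z / F - c|)^2
        ≤ (F * 2^ℓ) * ∑ f : ℱ, ∑ b : Fin ℓ → Bool, (num f b z / F - c)^2 := by
      rw [hprod (fun f b => |num f b z / F - c|), hprod (fun f b => (num f b z / F - c)^2)]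
      have := Finset.sum_mul_sq_le_sq_mul_sq univ
        (fun p : ℱ × (Fin ℓ → Bool) => |num p.1 p.2 z / F - c|) (fun _ => (1:ℝ))
      simp only [mul_one, one_pow, sq_abs, Finset.sum_const, nsmul_eq_mul, card_univ,
        Fintype.card_prod, hcardB] at this
      calc (∑ p : ℱ × (Fin ℓ → Bool), |num p.1 p.2 z / F - c|)^2
          ≤ (∑ p : ℱ × (Fin ℓ → Bool), (num p.1 p.2 z / F - c)^2)
            * ((Fintype.card ℱ * Fintype.card (Fin ℓ → Bool) : ℕ) : ℝ) := this
        _ = (F * 2^ℓ) * ∑ p : ℱ × (Fin ℓ → Bool), (num p.1 p.2 z / F - c)^2 := by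
            push_cast [hcardB]
            rw [hFdef]
            push_cast
            ring
    have hchain : (∑ f : ℱ, ∑ b : Fin ℓ → Bool, |num f b z / F - c|)^2
        ≤ (2^ℓ : ℝ) * (m z * Q z) := by
      have h6 : (F * 2^ℓ) * (∑ f : ℱ, ∑ b : Fin ℓ → Bool, (num f b z / F - c)^2)
          ≤ (F * 2^ℓ) * (Sq z / F) :=
        mul_le_mul_of_nonneg_left hTle (by positivity)
      have h7 : (F * 2^ℓ) * (Sq z / F) = (2^ℓ : ℝ) * Sq z := by
        field_simp
      have h8 : (2^ℓ : ℝ) * Sq z ≤ (2^ℓ : ℝ) * (m z * Q z) :=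
        mul_le_mul_of_nonneg_left (hSqm z) (by positivity)
      calc (∑ f : ℱ, ∑ b : Fin ℓ → Bool, |num f b z / F - c|)^2
          ≤ (F * 2^ℓ) * ∑ f : ℱ, ∑ b : Fin ℓ → Bool, (num f b z / F - c)^2 := hcs
        _ ≤ (F * 2^ℓ) * (Sq z / F) := h6
        _ = (2^ℓ : ℝ) * Sq z := h7
        _ ≤ (2^ℓ : ℝ) * (m z * Q z) := h8
    calc ∑ f : ℱ, ∑ b : Fin ℓ → Bool, |num f b z / F - c|
        = Real.sqrt ((∑ f : ℱ, ∑ b : Fin ℓ → Bool, |num f b z / F - c|)^2) :=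
          (Real.sqrt_sq hS0).symm
      _ ≤ Real.sqrt ((2^ℓ : ℝ) * (m z * Q z)) := Real.sqrt_le_sqrt hchain
  have hsumQ : ∑ z, Q z ≤ 1 := hqsum
  have hsumM : ∑ z, m z ≤ (2:ℝ)^(-t) := ht
  calc ∑ z : 𝒵, ∑ f : ℱ, ∑ b : Fin ℓ → Bool, |num f b z / F - (1 / 2 ^ ℓ) * Q z / F|
      ≤ ∑ z, Real.sqrt ((2^ℓ : ℝ) * (m z * Q z)) := Finset.sum_le_sum fun z _ => key z
    _ = ∑ z, Real.sqrt ((2:ℝ)^ℓ) * (Real.sqrt (m z) * Real.sqrt (Q z)) := by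
        refine Finset.sum_congr rfl fun z _ => ?_
        rw [Real.sqrt_mul (by positivity), Real.sqrt_mul (hm0 z)]
    _ = Real.sqrt ((2:ℝ)^ℓ) * ∑ z, Real.sqrt (m z) * Real.sqrt (Q z) := by
        rw [Finset.mul_sum]
    _ ≤ Real.sqrt ((2:ℝ)^ℓ) * (Real.sqrt ((2:ℝ)^(-t)) * Real.sqrt 1) := by
        refine mul_le_mul_of_nonneg_left ?_ (Real.sqrt_nonneg _)
        have hcs := Finset.sum_mul_sq_le_sq_mul_sq univ (fun z => Real.sqrt (m z))
          (fun z => Real.sqrt (Q z))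
        simp only [Real.sq_sqrt (hm0 _), Real.sq_sqrt (hQ0 _)] at hcs
        have h1 : (∑ z, Real.sqrt (m z) * Real.sqrt (Q z))^2 ≤ (2:ℝ)^(-t) * 1 := by
          refine le_trans hcs ?_
          exact mul_le_mul hsumM hsumQ (Finset.sum_nonneg fun z _ => hQ0 z)
            (by positivity)
        have h2 : 0 ≤ ∑ z, Real.sqrt (m z) * Real.sqrt (Q z) :=
          Finset.sum_nonneg fun z _ => mul_nonneg (Real.sqrt_nonneg _) (Real.sqrt_nonneg _)
        rw [← Real.sqrt_mul (by positivity)]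
        rw [← Real.sqrt_sq h2]
        exact Real.sqrt_le_sqrt h1
    _ = (2:ℝ) ^ (-(t - (ℓ:ℝ)) / 2) := by
        rw [Real.sqrt_one, mul_one, ← Real.sqrt_mul (by positivity),
          show ((2:ℝ)^ℓ : ℝ) = (2:ℝ)^((ℓ:ℝ)) from (Real.rpow_natCast 2 ℓ).symm,
          ← Real.rpow_add (by norm_num : (0:ℝ) < 2),
          Real.sqrt_eq_rpow, ← Real.rpow_mul (by norm_num : (0:ℝ) ≤ 2)]
        congr 1; ring
end

lemma sum_fiber_pred {α β M : Type*} [Fintype α] [Fintype β] [DecidableEq β] [AddCommMonoid M]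
    (g : α → β) (R : α → Prop) [DecidablePred R] (p : α → M) :
    ∑ b : β, ∑ ω ∈ univ.filter (fun ω => g ω = b ∧ R ω), p ω
      = ∑ ω ∈ univ.filter R, p ω := by
  have := fiber_sum g (fun _ => True) R p
  simpa using this

/-- Smooth leftover hash lemma: if there is an event `ℰ` with `P[ℰ] ≥ 1 - ε` and
`∑_z max_x P[X = x, Z = z, ℰ] ≤ 2^{-t}` (i.e. `H_min^ε(X|Z) ≥ t`), then the
distribution of `(F(X), F, Z)`, with `F` uniform over a universal-2 family and
independent of `(X, Z, ℰ)` (product space model), is within statistical distance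
`(1/2)·2^{-(t-ℓ)/2} + 2ε` of `(U, F, Z)`. -/
theorem smooth_leftover_hash_lemma
    {Ω 𝒳 𝒵 ℱ : Type*} [Fintype Ω] [Fintype 𝒳] [Fintype 𝒵] [Fintype ℱ]
    [Nonempty 𝒳] [Nonempty ℱ] [DecidableEq 𝒳] [DecidableEq 𝒵]
    (ℓ : ℕ) (t ε : ℝ) (hε : 0 ≤ ε)
    (p : Ω → ℝ) (hp : ∀ ω, 0 ≤ p ω) (hsum : ∑ ω, p ω = 1)
    (X : Ω → 𝒳) (Z : Ω → 𝒵) (E : Ω → Prop) [DecidablePred E]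
    (hPE : 1 - ε ≤ ∑ ω ∈ univ.filter (fun ω => E ω), p ω)
    (hsmooth : ∑ z, (univ : Finset 𝒳).sup' univ_nonempty (fun x =>
        ∑ ω ∈ univ.filter (fun ω => X ω = x ∧ Z ω = z ∧ E ω), p ω) ≤ (2:ℝ) ^ (-t))
    (hash : ℱ → 𝒳 → (Fin ℓ → Bool))
    (huniv2 : ∀ x x' : 𝒳, x ≠ x' →
      (((univ : Finset ℱ).filter (fun f => hash f x = hash f x')).card : ℝ)
        ≤ (Fintype.card ℱ : ℝ) / 2 ^ ℓ) :
    (1 / 2) * ∑ b : Fin ℓ → Bool, ∑ f : ℱ, ∑ z : 𝒵,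
        |(∑ ω ∈ univ.filter (fun ω => hash f (X ω) = b ∧ Z ω = z), p ω)
              / (Fintype.card ℱ : ℝ)
          - (1 / 2 ^ ℓ) * (∑ ω ∈ univ.filter (fun ω => Z ω = z), p ω)
              / (Fintype.card ℱ : ℝ)|
      ≤ (1 / 2) * (2:ℝ) ^ (-(t - ℓ) / 2) + 2 * ε := by
  classical
  have hF : (0:ℝ) < (Fintype.card ℱ : ℝ) := by exact_mod_cast Fintype.card_pos (α := ℱ)
  set q : 𝒳 → 𝒵 → ℝ :=
    fun x z => ∑ ω ∈ univ.filter (fun ω => X ω = x ∧ Z ω = z ∧ E ω), p ω with hqdef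
  have hq0 : ∀ x z, 0 ≤ q x z := fun x z => Finset.sum_nonneg fun ω _ => hp ω
  set Pn : ℝ := ∑ ω ∈ univ.filter (fun ω => ¬ E ω), p ω with hPndef
  have hPn0 : 0 ≤ Pn := Finset.sum_nonneg fun ω _ => hp ω
  have hPn : Pn ≤ ε := by
    have h := Finset.sum_filter_add_sum_filter_not univ E p
    rw [hsum] at h
    rw [hPndef]
    linarith [hPE]
  have hcardB : (Fintype.card (Fin ℓ → Bool) : ℝ) = 2^ℓ := by
    simp [Fintype.card_fun]
  -- identities relating q-sums to p-sums
  have hBnum : ∀ (f : ℱ) (b : Fin ℓ → Bool) (z : 𝒵),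
      ∑ x ∈ univ.filter (fun x => hash f x = b), q x z
        = ∑ ω ∈ univ.filter (fun ω => hash f (X ω) = b ∧ Z ω = z ∧ E ω), p ω :=
    fun f b z => fiber_sum X (fun x => hash f x = b) (fun ω => Z ω = z ∧ E ω) p
  have hVnum : ∀ z : 𝒵, ∑ x, q x z = ∑ ω ∈ univ.filter (fun ω => Z ω = z ∧ E ω), p ω := by
    intro z
    have h := fiber_sum X (fun _ => True) (fun ω => Z ω = z ∧ E ω) p
    simpa using h
  have hqsum : ∑ z, ∑ x, q x z ≤ 1 := by
    have h1 : ∑ z, ∑ x, q x z = ∑ ω ∈ univ.filter (fun ω => E ω), p ω := by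
      simp only [hVnum]
      exact sum_fiber_pred Z E p
    rw [h1]
    calc ∑ ω ∈ univ.filter (fun ω => E ω), p ω
        ≤ ∑ ω, p ω := Finset.sum_le_sum_of_subset_of_nonneg (filter_subset _ _)
          (fun ω _ _ => hp ω)
      _ = 1 := hsum
  have haux := lhl_aux ℓ t q hq0 hqsum hsmooth hash huniv2
  -- splitting identities
  have hsplitA : ∀ (f : ℱ) (b : Fin ℓ → Bool) (z : 𝒵),
      ∑ ω ∈ univ.filter (fun ω => hash f (X ω) = b ∧ Z ω = z), p ω
        = (∑ ω ∈ univ.filter (fun ω => hash f (X ω) = b ∧ Z ω = z ∧ E ω), p ω)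
          + ∑ ω ∈ univ.filter (fun ω => (hash f (X ω) = b ∧ Z ω = z) ∧ ¬ E ω), p ω := by
    intro f b z
    rw [← Finset.sum_filter_add_sum_filter_not
      (univ.filter (fun ω => hash f (X ω) = b ∧ Z ω = z)) E p,
      Finset.filter_filter, Finset.filter_filter]
    congr 2
    ext ω
    simp only [mem_filter, mem_univ, true_and]
    tauto
  have hsplitU : ∀ z : 𝒵,
      ∑ ω ∈ univ.filter (fun ω => Z ω = z), p ω
        = (∑ ω ∈ univ.filter (fun ω => Z ω = z ∧ E ω), p ω)
          + ∑ ω ∈ univ.filter (fun ω => Z ω = z ∧ ¬ E ω), p ω := by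
    intro z
    rw [← Finset.sum_filter_add_sum_filter_not (univ.filter (fun ω => Z ω = z)) E p,
      Finset.filter_filter, Finset.filter_filter]
  -- pointwise triangle inequality
  have tri : ∀ (b : Fin ℓ → Bool) (f : ℱ) (z : 𝒵),
      |(∑ ω ∈ univ.filter (fun ω => hash f (X ω) = b ∧ Z ω = z), p ω)
            / (Fintype.card ℱ : ℝ)
        - (1 / 2 ^ ℓ) * (∑ ω ∈ univ.filter (fun ω => Z ω = z), p ω)
            / (Fintype.card ℱ : ℝ)|
      ≤ (∑ ω ∈ univ.filter (fun ω => (hash f (X ω) = b ∧ Z ω = z) ∧ ¬ E ω), p ω)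
            / (Fintype.card ℱ : ℝ)
        + |(∑ x ∈ univ.filter (fun x => hash f x = b), q x z) / (Fintype.card ℱ : ℝ)
            - (1 / 2 ^ ℓ) * (∑ x, q x z) / (Fintype.card ℱ : ℝ)|
        + (1 / 2 ^ ℓ) * (∑ ω ∈ univ.filter (fun ω => Z ω = z ∧ ¬ E ω), p ω)
            / (Fintype.card ℱ : ℝ) := by
    intro b f z
    rw [hBnum f b z, hVnum z]
    have ha' : 0 ≤ ∑ ω ∈ univ.filter (fun ω => (hash f (X ω) = b ∧ Z ω = z) ∧ ¬ E ω), p ω :=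
      Finset.sum_nonneg fun ω _ => hp ω
    have hu' : 0 ≤ ∑ ω ∈ univ.filter (fun ω => Z ω = z ∧ ¬ E ω), p ω :=
      Finset.sum_nonneg fun ω _ => hp ω
    rw [hsplitA f b z, hsplitU z]
    set aE := ∑ ω ∈ univ.filter (fun ω => hash f (X ω) = b ∧ Z ω = z ∧ E ω), p ω
    set a' := ∑ ω ∈ univ.filter (fun ω => (hash f (X ω) = b ∧ Z ω = z) ∧ ¬ E ω), p ω
    set uE := ∑ ω ∈ univ.filter (fun ω => Z ω = z ∧ E ω), p ω
    set u' := ∑ ω ∈ univ.filter (fun ω => Z ω = z ∧ ¬ E ω), p ω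
    have hexpand : (aE + a') / (Fintype.card ℱ : ℝ)
        - (1 / 2 ^ ℓ) * (uE + u') / (Fintype.card ℱ : ℝ)
        = (aE / (Fintype.card ℱ : ℝ) - (1 / 2 ^ ℓ) * uE / (Fintype.card ℱ : ℝ))
          + (a' / (Fintype.card ℱ : ℝ) - (1 / 2 ^ ℓ) * u' / (Fintype.card ℱ : ℝ)) := by
      field_simp
      ring
    rw [hexpand]
    have h1 := abs_add_le (aE / (Fintype.card ℱ : ℝ) - (1 / 2 ^ ℓ) * uE / (Fintype.card ℱ : ℝ))
      (a' / (Fintype.card ℱ : ℝ) - (1 / 2 ^ ℓ) * u' / (Fintype.card ℱ : ℝ))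
    have h2 : |a' / (Fintype.card ℱ : ℝ) - (1 / 2 ^ ℓ) * u' / (Fintype.card ℱ : ℝ)|
        ≤ a' / (Fintype.card ℱ : ℝ) + (1 / 2 ^ ℓ) * u' / (Fintype.card ℱ : ℝ) := by
      refine (abs_sub _ _).trans ?_
      rw [abs_of_nonneg (by positivity), abs_of_nonneg (by positivity)]
    linarith [h1, h2]
  -- summing
  have swap3 : ∀ (g : (Fin ℓ → Bool) → ℱ → 𝒵 → ℝ),
      ∑ b, ∑ f, ∑ z, g b f z = ∑ f, ∑ z, ∑ b, g b f z := by
    intro g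
    calc ∑ b, ∑ f, ∑ z, g b f z = ∑ f, ∑ b, ∑ z, g b f z := Finset.sum_comm
      _ = ∑ f, ∑ z, ∑ b, g b f z := Finset.sum_congr rfl fun f _ => Finset.sum_comm
  have e1 : ∀ (f : ℱ) (z : 𝒵),
      ∑ b : Fin ℓ → Bool,
          ∑ ω ∈ univ.filter (fun ω => (hash f (X ω) = b ∧ Z ω = z) ∧ ¬ E ω), p ω
        = ∑ ω ∈ univ.filter (fun ω => Z ω = z ∧ ¬ E ω), p ω := by
    intro f z
    have h := sum_fiber_pred (fun ω => hash f (X ω)) (fun ω => Z ω = z ∧ ¬ E ω) p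
    rw [← h]
    refine Finset.sum_congr rfl fun b _ => Finset.sum_congr ?_ fun _ _ => rfl
    ext ω
    simp only [mem_filter, mem_univ, true_and]
    tauto
  have e2 : ∑ z : 𝒵, ∑ ω ∈ univ.filter (fun ω => Z ω = z ∧ ¬ E ω), p ω = Pn :=
    sum_fiber_pred Z (fun ω => ¬ E ω) p
  have S1 : ∑ b : Fin ℓ → Bool, ∑ f : ℱ, ∑ z : 𝒵,
      (∑ ω ∈ univ.filter (fun ω => (hash f (X ω) = b ∧ Z ω = z) ∧ ¬ E ω), p ω)
        / (Fintype.card ℱ : ℝ) = Pn := by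
    rw [swap3]
    have hinner : ∀ f : ℱ, ∑ z : 𝒵, ∑ b : Fin ℓ → Bool,
        (∑ ω ∈ univ.filter (fun ω => (hash f (X ω) = b ∧ Z ω = z) ∧ ¬ E ω), p ω)
          / (Fintype.card ℱ : ℝ) = Pn / (Fintype.card ℱ : ℝ) := by
      intro f
      have : ∀ z : 𝒵, ∑ b : Fin ℓ → Bool,
          (∑ ω ∈ univ.filter (fun ω => (hash f (X ω) = b ∧ Z ω = z) ∧ ¬ E ω), p ω)
            / (Fintype.card ℱ : ℝ)
          = (∑ ω ∈ univ.filter (fun ω => Z ω = z ∧ ¬ E ω), p ω) / (Fintype.card ℱ : ℝ) := by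
        intro z
        rw [← Finset.sum_div, e1 f z]
      simp only [this]
      rw [← Finset.sum_div, e2]
    simp only [hinner, Finset.sum_const, nsmul_eq_mul, card_univ]
    field_simp
  have S3 : ∑ b : Fin ℓ → Bool, ∑ f : ℱ, ∑ z : 𝒵,
      (1 / 2 ^ ℓ) * (∑ ω ∈ univ.filter (fun ω => Z ω = z ∧ ¬ E ω), p ω)
        / (Fintype.card ℱ : ℝ) = Pn := by
    have hz : ∑ z : 𝒵, (1 / 2 ^ ℓ) * (∑ ω ∈ univ.filter (fun ω => Z ω = z ∧ ¬ E ω), p ω)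
        / (Fintype.card ℱ : ℝ) = (1 / 2 ^ ℓ) * Pn / (Fintype.card ℱ : ℝ) := by
      rw [← Finset.sum_div, ← Finset.mul_sum, e2]
    simp only [hz, Finset.sum_const, nsmul_eq_mul, card_univ, hcardB]
    have h2 : ((2:ℝ)^ℓ) ≠ 0 := by positivity
    field_simp
  calc (1 / 2) * ∑ b : Fin ℓ → Bool, ∑ f : ℱ, ∑ z : 𝒵,
        |(∑ ω ∈ univ.filter (fun ω => hash f (X ω) = b ∧ Z ω = z), p ω)
              / (Fintype.card ℱ : ℝ)
          - (1 / 2 ^ ℓ) * (∑ ω ∈ univ.filter (fun ω => Z ω = z), p ω)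
              / (Fintype.card ℱ : ℝ)|
      ≤ (1 / 2) * ∑ b : Fin ℓ → Bool, ∑ f : ℱ, ∑ z : 𝒵,
        ((∑ ω ∈ univ.filter (fun ω => (hash f (X ω) = b ∧ Z ω = z) ∧ ¬ E ω), p ω)
              / (Fintype.card ℱ : ℝ)
          + |(∑ x ∈ univ.filter (fun x => hash f x = b), q x z) / (Fintype.card ℱ : ℝ)
              - (1 / 2 ^ ℓ) * (∑ x, q x z) / (Fintype.card ℱ : ℝ)|
          + (1 / 2 ^ ℓ) * (∑ ω ∈ univ.filter (fun ω => Z ω = z ∧ ¬ E ω), p ω)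
              / (Fintype.card ℱ : ℝ)) := by
        refine mul_le_mul_of_nonneg_left ?_ (by norm_num)
        exact Finset.sum_le_sum fun b _ => Finset.sum_le_sum fun f _ =>
          Finset.sum_le_sum fun z _ => tri b f z
    _ ≤ (1 / 2) * (2:ℝ) ^ (-(t - ℓ) / 2) + 2 * ε := by
        simp only [Finset.sum_add_distrib]
        rw [S1, S3]
        have := haux
        nlinarith [haux, hPn, hPn0, hε]
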